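/- arXiv:0812.0749 — 2 statements merged into one kernel-verified Lean document; each statement's English description precedes it below -/
import Mathlib

section
/- Let j : I°_{≤1} ⥤ I° be the full inclusion. For every object o of I° (i.e. every nonzero finitely supported function o : ℕ →₀ ℕ), the comma category StructuredArrow o j (the category of objects of I°_{≤1} under o) has an initial object, namely the pair consisting of o' defined by o' i = min (o i) 1 (which is nonzero and {0,1}-valued) together with the unique morphism o ⟶ o' coming from o' ≤ o. -/
open CategoryTheory CategoryTheory.Limits

/-- The monomial category `I`: objects are finitely supported functions `ℕ →₀ ℕ`
(exponent vectors of monomials in the variables `x_1, x_2, …`), with a unique morphism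
`f ⟶ g` iff `g ≤ f` pointwise (i.e. `g` divides `f`).  It is realized as the preorder
category on the order dual of `ℕ →₀ ℕ`.  `I°` is the full subcategory of nonzero
(nonconstant) monomials. -/
abbrev Io : Type := ObjectProperty.FullSubcategory fun f : (ℕ →₀ ℕ)ᵒᵈ => OrderDual.ofDual f ≠ 0

/-- The category `I°_{≤1}` of nonconstant monomials containing each variable with
multiplicity at most `1`. -/
abbrev Io1 : Type := ObjectProperty.FullSubcategory fun f : (ℕ →₀ ℕ)ᵒᵈ =>
  OrderDual.ofDual f ≠ 0 ∧ ∀ i, OrderDual.ofDual f i ≤ 1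

/-- The full inclusion `j : I°_{≤1} ⥤ I°`. -/
def jIncl : Io1 ⥤ Io := ObjectProperty.ιOfLE fun _ h => h.1

/-- Truncation of the exponents of a monomial at `1`: `(trunc o) i = min (o i) 1`. -/
noncomputable def trunc (o : ℕ →₀ ℕ) : ℕ →₀ ℕ := o.mapRange (fun k => min k 1) (by simp)

lemma trunc_apply (o : ℕ →₀ ℕ) (i : ℕ) : trunc o i = min (o i) 1 :=
  Finsupp.mapRange_apply ..

lemma trunc_le (o : ℕ →₀ ℕ) : trunc o ≤ o :=
  Finsupp.le_def.mpr fun i => by rw [trunc_apply]; exact min_le_left _ _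

lemma trunc_le_one (o : ℕ →₀ ℕ) (i : ℕ) : trunc o i ≤ 1 := by
  rw [trunc_apply]; exact min_le_right _ _

lemma trunc_ne_zero {o : ℕ →₀ ℕ} (h : o ≠ 0) : trunc o ≠ 0 := by
  obtain ⟨i, hi⟩ := Finsupp.ne_iff.mp h
  refine Finsupp.ne_iff.mpr ⟨i, ?_⟩
  simp only [trunc_apply, Finsupp.coe_zero, Pi.zero_apply] at *
  omega

/-- The truncated monomial `o'`, `o' i = min (o i) 1`, as an object of `I°_{≤1}`. -/
noncomputable def truncObj (o : Io) : Io1 :=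
  ⟨OrderDual.toDual (trunc (OrderDual.ofDual o.obj)),
    trunc_ne_zero o.property, trunc_le_one _⟩

/-- The unique morphism `o ⟶ j.obj (truncObj o)` in `I°`, coming from `trunc o ≤ o`. -/
noncomputable def truncHom (o : Io) : o ⟶ jIncl.obj (truncObj o) :=
  ObjectProperty.homMk (homOfLE (OrderDual.le_toDual.mpr (trunc_le _)))

/-- For every object `o` of `I°`, the comma category `StructuredArrow o j` of objects of
`I°_{≤1}` under `o` has an initial object, namely the truncation `o' = min (o ·) 1`
together with the unique morphism `o ⟶ o'`. -/
theorem structuredArrow_hasInitial_trunc (o : Io) :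
    Nonempty (IsInitial (StructuredArrow.mk (truncHom o))) := by
  refine ⟨IsInitial.ofUniqueHom (fun X => ?_) (fun X m => ?_)⟩
  · refine StructuredArrow.homMk (ObjectProperty.homMk (homOfLE ?_)) (ObjectProperty.hom_ext _ (Subsingleton.elim _ _))
    have h1 : OrderDual.ofDual X.right.obj ≤ OrderDual.ofDual o.obj := leOfHom X.hom.hom
    have h2 := X.right.property.2
    show OrderDual.ofDual X.right.obj ≤ trunc (OrderDual.ofDual o.obj)
    refine Finsupp.le_def.mpr fun i => ?_
    have := Finsupp.le_def.mp h1 i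
    have := h2 i
    rw [trunc_apply]
    omega
  · apply StructuredArrow.hom_ext
    apply ObjectProperty.hom_ext
    apply Subsingleton.elim
end

section
/- The full inclusion functor j : I°_{≤1} ⥤ I° is a final functor (in the sense of CategoryTheory.Functor.Final): for every object o of I° the comma category StructuredArrow o j is connected (indeed it has an initial object). Consequently, for any functor G : I° ⥤ C into a category C, a colimit of G exists if and only if a colimit of its restriction j ⋙ G exists, and the canonical map between them is an isomorphism. -/
open CategoryTheory CategoryTheory.Limits

universe v u

instance jIncl_final_inst : jIncl.Final := by
  constructor
  intro o
  -- the truncation of `o` to multiplicities `≤ 1`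
  set t : ℕ →₀ ℕ := Finsupp.mapRange (fun n => min n 1) (by simp) (OrderDual.ofDual o.obj)
    with ht
  have htle : ∀ i, t i ≤ OrderDual.ofDual o.obj i := by
    intro i; simp [ht, Finsupp.mapRange_apply]
  have htne : t ≠ 0 := by
    intro h
    apply o.property
    ext i
    have := DFunLike.congr_fun h i
    simp [ht, Finsupp.mapRange_apply] at this
    simpa using this
  have ht1 : ∀ i, t i ≤ 1 := by
    intro i; simp [ht, Finsupp.mapRange_apply]
  let T : Io1 := ⟨OrderDual.toDual t, htne, ht1⟩
  have hto : (o.obj : (ℕ →₀ ℕ)ᵒᵈ) ≤ OrderDual.toDual t := Finsupp.le_def.mpr htle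
  let X : StructuredArrow o jIncl :=
    StructuredArrow.mk (Y := T) (ObjectProperty.homMk (homOfLE hto))
  have key : ∀ Y : StructuredArrow o jIncl, Nonempty (X ⟶ Y) := by
    intro Y
    have hle : OrderDual.ofDual Y.right.obj ≤ t := by
      intro i
      have h1 : OrderDual.ofDual Y.right.obj i ≤ OrderDual.ofDual o.obj i :=
        (leOfHom Y.hom.hom) i
      have h2 := Y.right.property.2 i
      simp [ht, Finsupp.mapRange_apply]
      omega
    have hle' : (T.obj : (ℕ →₀ ℕ)ᵒᵈ) ≤ Y.right.obj := Finsupp.le_def.mpr hle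
    exact ⟨StructuredArrow.homMk (ObjectProperty.homMk (homOfLE hle')) (ObjectProperty.hom_ext _ (Subsingleton.elim _ _))⟩
  have : Nonempty (StructuredArrow o jIncl) := ⟨X⟩
  apply zigzag_isConnected
  intro j₁ j₂
  exact Relation.ReflTransGen.trans
    (Relation.ReflTransGen.single (Or.inr (key j₁)))
    (Relation.ReflTransGen.single (Or.inl (key j₂)))

/-- The inclusion `j : I°_{≤1} ⥤ I°` is a final functor (each comma category
`StructuredArrow o j` is connected); consequently, for any functor `G : I° ⥤ C`,
a colimit of `G` exists iff a colimit of the restriction `j ⋙ G` exists, and in that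
case the canonical map `colimit (j ⋙ G) ⟶ colimit G` is an isomorphism. -/
theorem jIncl_final :
    jIncl.Final ∧
      ∀ (C : Type u) [Category.{v} C] (G : Io ⥤ C),
        (HasColimit G ↔ HasColimit (jIncl ⋙ G)) ∧
        ∀ [HasColimit G] [HasColimit (jIncl ⋙ G)], IsIso (colimit.pre G jIncl) := by
  refine ⟨jIncl_final_inst, fun C _ G => ⟨⟨fun _ => inferInstance,
    fun h => Functor.Final.hasColimit_of_comp jIncl⟩, by intros; exact inferInstance⟩⟩
end
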